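/- Let λ₀ ∈ ℝ. Suppose F : ℝ → ℂ^{N×N} is twice continuously differentiable on [0,1], satisfies −F'' + V(x)F = λ₀F on [0,1], F(0) = T₋^⊥ and F'(0) = T₋ + aT₋^⊥; and suppose G : ℝ → ℂ^{N×N} is twice continuously differentiable on [0,1], satisfies −G'' + V(x)G = λ₀G + F on [0,1] with G(0) = G'(0) = 0. Let P be the orthogonal projector onto Ker(Γ₊F) = {h ∈ ℂ^N : (Γ₊F)·h = 0}. Then P·(∫₀¹ F(x)ᴴF(x) dx)·P = −P·(Γ₊G)ᴴ·(Γ₊°F)·P. -/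

import Mathlib

open Matrix Set

/-- Pure noncommutative-ring algebra step. -/
theorem aux_alg_gram {R : Type*} [Ring R] (Tp b F1 F1' Gc Gc' P : R)
    (hb2 : (1 - Tp) * b = b) (hTp2 : Tp * Tp = Tp)
    (h1 : Tp * (F1 * P) = 0) (h2 : (1 - Tp) * (F1' + b * F1) * P = 0) :
    (Gc * F1' - Gc' * F1) * P =
      -(((Gc' + Gc * b) * (1 - Tp) - Gc * Tp) * (((1 - Tp) * F1 + Tp * F1') * P)) := by
  have hproj1 : (1 - Tp) * (1 - Tp) = 1 - Tp := by
    have h : (1 - Tp) * (1 - Tp) = 1 - Tp - (Tp - Tp * Tp) := by noncomm_ring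
    rw [h, hTp2]; noncomm_ring
  have hproj2 : (1 - Tp) * Tp = 0 := by
    have h : (1 - Tp) * Tp = Tp - Tp * Tp := by noncomm_ring
    rw [h, hTp2, sub_self]
  have hproj3 : Tp * (1 - Tp) = 0 := by
    have h : Tp * (1 - Tp) = Tp - Tp * Tp := by noncomm_ring
    rw [h, hTp2, sub_self]
  have hFP : (1 - Tp) * (F1 * P) = F1 * P := by
    rw [sub_mul, one_mul, h1, sub_zero]
  have hF'P : (1 - Tp) * (F1' * P) = -(b * (F1 * P)) := by
    have e : (1 - Tp) * (F1' * P) + ((1 - Tp) * b) * (F1 * P)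
        = (1 - Tp) * (F1' + b * F1) * P := by noncomm_ring
    rw [hb2, h2] at e
    exact eq_neg_of_add_eq_zero_left e
  have hS1 : (1 - Tp) * (((1 - Tp) * F1 + Tp * F1') * P) = F1 * P := by
    have h : (1 - Tp) * (((1 - Tp) * F1 + Tp * F1') * P)
        = ((1 - Tp) * (1 - Tp)) * (F1 * P) + ((1 - Tp) * Tp) * (F1' * P) := by noncomm_ring
    rw [h, hproj1, hproj2, hFP, zero_mul, add_zero]
  have hS2 : Tp * (((1 - Tp) * F1 + Tp * F1') * P) = F1' * P + b * (F1 * P) := by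
    calc Tp * (((1 - Tp) * F1 + Tp * F1') * P)
        = (Tp * (1 - Tp)) * (F1 * P) + (Tp * Tp) * (F1' * P) := by noncomm_ring
      _ = Tp * (F1' * P) := by rw [hproj3, hTp2, zero_mul, zero_add]
      _ = F1' * P - (1 - Tp) * (F1' * P) := by noncomm_ring
      _ = F1' * P + b * (F1 * P) := by rw [hF'P]; noncomm_ring
  have hCS : ((Gc' + Gc * b) * (1 - Tp) - Gc * Tp) * (((1 - Tp) * F1 + Tp * F1') * P)
      = (Gc' + Gc * b) * ((1 - Tp) * (((1 - Tp) * F1 + Tp * F1') * P))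
        - Gc * (Tp * (((1 - Tp) * F1 + Tp * F1') * P)) := by noncomm_ring
  rw [hCS, hS1, hS2]
  noncomm_ring

/-- With `F` the fundamental solution at `λ₀` (boundary data at `0`) and
`G = ∂F/∂λ` (i.e. `-G'' + VG = λ₀G + F`, `G(0) = G'(0) = 0`), and `P` the orthogonal
projector onto `Ker(Γ₊F)`, one has `P (∫₀¹ FᴴF) P = -P (Γ₊G)ᴴ (Γ₊°F) P`. -/
theorem gram_matrix_formula {N : ℕ} (hN : 1 ≤ N)
    (Tm Tp a b : Matrix (Fin N) (Fin N) ℂ)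
    (hTmH : Tmᴴ = Tm) (hTm2 : Tm * Tm = Tm) (hTpH : Tpᴴ = Tp) (hTp2 : Tp * Tp = Tp)
    (haH : aᴴ = a) (ha : a = (1 - Tm) * a * (1 - Tm))
    (hbH : bᴴ = b) (hb : b = (1 - Tp) * b * (1 - Tp))
    (V : ℝ → Matrix (Fin N) (Fin N) ℂ)
    (hVc : ∀ i j, Continuous fun x => V x i j)
    (hVh : ∀ x ∈ Icc (0:ℝ) 1, (V x)ᴴ = V x)
    (lam0 : ℝ)
    (F F' F'' G G' G'' : ℝ → Matrix (Fin N) (Fin N) ℂ)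
    (hF' : ∀ x ∈ Icc (0:ℝ) 1, ∀ i j, HasDerivAt (fun t => F t i j) (F' x i j) x)
    (hF'' : ∀ x ∈ Icc (0:ℝ) 1, ∀ i j, HasDerivAt (fun t => F' t i j) (F'' x i j) x)
    (hF''c : ∀ i j, ContinuousOn (fun x => F'' x i j) (Icc (0:ℝ) 1))
    (hFeq : ∀ x ∈ Icc (0:ℝ) 1, -F'' x + V x * F x = (lam0 : ℂ) • F x)
    (hF0 : F 0 = 1 - Tm) (hF'0 : F' 0 = Tm + a * (1 - Tm))
    (hG' : ∀ x ∈ Icc (0:ℝ) 1, ∀ i j, HasDerivAt (fun t => G t i j) (G' x i j) x)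
    (hG'' : ∀ x ∈ Icc (0:ℝ) 1, ∀ i j, HasDerivAt (fun t => G' t i j) (G'' x i j) x)
    (hG''c : ∀ i j, ContinuousOn (fun x => G'' x i j) (Icc (0:ℝ) 1))
    (hGeq : ∀ x ∈ Icc (0:ℝ) 1, -G'' x + V x * G x = (lam0 : ℂ) • G x + F x)
    (hG0 : G 0 = 0) (hG'0 : G' 0 = 0)
    (P : Matrix (Fin N) (Fin N) ℂ) (hPH : Pᴴ = P) (hP2 : P * P = P)
    (hPker : ∀ v : Fin N → ℂ,
      ((1 - Tp) * (F' 1 + b * F 1) - Tp * F 1) *ᵥ v = 0 ↔ P *ᵥ v = v) :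
    P * (Matrix.of fun i j => ∫ x in (0:ℝ)..1, ((F x)ᴴ * F x) i j) * P =
      -(P * ((1 - Tp) * (G' 1 + b * G 1) - Tp * G 1)ᴴ *
          ((1 - Tp) * F 1 + Tp * F' 1) * P) := by
  -- Step 1: the Wronskian identity `(G''ᴴF - GᴴF'') = -FᴴF` from the ODEs.
  have hODE : ∀ x ∈ Icc (0:ℝ) 1, (G'' x)ᴴ * F x - (G x)ᴴ * F'' x = -((F x)ᴴ * F x) := by
    intro x hx
    have hf : F'' x = V x * F x - (lam0 : ℂ) • F x := by
      rw [← hFeq x hx]; abel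
    have hg : G'' x = V x * G x - ((lam0 : ℂ) • G x + F x) := by
      rw [← hGeq x hx]; abel
    rw [hf, hg]
    simp only [conjTranspose_sub, conjTranspose_add, conjTranspose_smul, conjTranspose_mul,
      hVh x hx, Complex.star_def, Complex.conj_ofReal]
    simp only [Matrix.sub_mul, Matrix.add_mul, Matrix.smul_mul, Matrix.mul_sub, Matrix.mul_add,
      Matrix.mul_smul, Matrix.mul_assoc]
    abel
  -- Step 2: integrate the Wronskian.
  have hInt : (Matrix.of fun i j => ∫ x in (0:ℝ)..1, ((F x)ᴴ * F x) i j)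
      = (G 1)ᴴ * F' 1 - (G' 1)ᴴ * F 1 := by
    ext i j
    set w : ℝ → ℂ := fun t => ∑ k, (star (G' t k i) * F t k j - star (G t k i) * F' t k j)
      with hw
    have hderiv : ∀ x ∈ uIcc (0:ℝ) 1, HasDerivAt w (-(((F x)ᴴ * F x) i j)) x := by
      rw [uIcc_of_le zero_le_one]
      intro x hx
      have hd : HasDerivAt w
          (∑ k, ((star (G'' x k i) * F x k j + star (G' x k i) * F' x k j)
            - (star (G' x k i) * F' x k j + star (G x k i) * F'' x k j))) x :=
        HasDerivAt.fun_sum fun k _ =>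
          (((hG'' x hx k i).star.mul (hF' x hx k j)).sub
            ((hG' x hx k i).star.mul (hF'' x hx k j)))
      convert hd using 1
      have hs : (∑ k, ((star (G'' x k i) * F x k j + star (G' x k i) * F' x k j)
            - (star (G' x k i) * F' x k j + star (G x k i) * F'' x k j)))
          = ((G'' x)ᴴ * F x - (G x)ᴴ * F'' x) i j := by
        rw [Matrix.sub_apply, Matrix.mul_apply, Matrix.mul_apply, ← Finset.sum_sub_distrib]
        refine Finset.sum_congr rfl fun k _ => ?_
        simp only [Matrix.conjTranspose_apply]
        ring
      rw [hs, hODE x hx, Matrix.neg_apply]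
    have hcont : ContinuousOn (fun x => -(((F x)ᴴ * F x) i j)) (uIcc (0:ℝ) 1) := by
      rw [uIcc_of_le zero_le_one]
      have he : ∀ x : ℝ, -(((F x)ᴴ * F x) i j) = -(∑ k, star (F x k i) * F x k j) := by
        intro x; simp [Matrix.mul_apply, Matrix.conjTranspose_apply]
      simp only [he]
      refine (continuousOn_finset_sum _ fun k _ => ContinuousOn.mul ?_ ?_).neg
      · exact ContinuousOn.star fun x hx => ((hF' x hx k i).continuousAt.continuousWithinAt)
      · exact fun x hx => (hF' x hx k j).continuousAt.continuousWithinAt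
    have hI := intervalIntegral.integral_eq_sub_of_hasDerivAt hderiv hcont.intervalIntegrable
    rw [intervalIntegral.integral_neg] at hI
    have hval : (∫ x in (0:ℝ)..1, ((F x)ᴴ * F x) i j) = w 0 - w 1 := by linear_combination -hI
    have hw0 : w 0 = 0 := by simp [hw, hG0, hG'0]
    have hw1 : w 1 = ((G' 1)ᴴ * F 1 - (G 1)ᴴ * F' 1) i j := by
      simp [hw, Matrix.sub_apply, Matrix.mul_apply, Matrix.conjTranspose_apply,
        Finset.sum_sub_distrib]
    rw [Matrix.of_apply, hval, hw0, hw1]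
    simp only [Matrix.sub_apply]
    ring
  -- Step 3: `(Γ₊F) P = 0`.
  have hMP : ((1 - Tp) * (F' 1 + b * F 1) - Tp * F 1) * P = 0 := by
    have hv : ∀ v, (((1 - Tp) * (F' 1 + b * F 1) - Tp * F 1) * P) *ᵥ v = 0 := by
      intro v
      rw [← Matrix.mulVec_mulVec]
      refine (hPker (P *ᵥ v)).mpr ?_
      rw [Matrix.mulVec_mulVec, hP2]
    ext i j
    have h := hv (Pi.single j 1)
    rw [Matrix.mulVec_single] at h
    have h' := congrFun h i
    simpa using h'
  -- Step 4: the two consequences.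
  have h1 : Tp * (F 1 * P) = 0 := by
    have e : Tp * (((1 - Tp) * (F' 1 + b * F 1) - Tp * F 1) * P)
        = (Tp - Tp * Tp) * ((F' 1 + b * F 1) * P) - (Tp * Tp) * (F 1 * P) := by noncomm_ring
    rw [hMP, mul_zero, hTp2, sub_self, zero_mul, zero_sub, eq_comm, neg_eq_zero] at e
    exact e
  have h2 : (1 - Tp) * (F' 1 + b * F 1) * P = 0 := by
    have e : (1 - Tp) * (F' 1 + b * F 1) * P
        = ((1 - Tp) * (F' 1 + b * F 1) - Tp * F 1) * P + Tp * (F 1 * P) := by noncomm_ring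
    rw [hMP, h1, zero_add] at e
    exact e
  -- Step 5: `(1 - Tp) * b = b`.
  have hproj1 : (1 - Tp) * (1 - Tp) = 1 - Tp := by
    have h : (1 - Tp) * (1 - Tp) = 1 - Tp - (Tp - Tp * Tp) := by noncomm_ring
    rw [h, hTp2]; noncomm_ring
  have hb2 : (1 - Tp) * b = b := by
    conv_lhs => rw [hb]
    rw [← Matrix.mul_assoc, ← Matrix.mul_assoc, hproj1, ← hb]
  -- Step 6: conjugate transpose of `Γ₊G`.
  have hCH : ((1 - Tp) * (G' 1 + b * G 1) - Tp * G 1)ᴴ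
      = ((G' 1)ᴴ + (G 1)ᴴ * b) * (1 - Tp) - (G 1)ᴴ * Tp := by
    simp [conjTranspose_sub, conjTranspose_mul, conjTranspose_add, conjTranspose_one,
      hbH, hTpH]
  -- Step 7: conclude by the algebra lemma.
  have key := aux_alg_gram Tp b (F 1) (F' 1) ((G 1)ᴴ) ((G' 1)ᴴ) P hb2 hTp2 h1 h2
  rw [hInt, hCH, Matrix.mul_assoc, key]
  noncomm_ring
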